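/- Let Â be symmetric positive definite with Ω = Â^{1/2}, and let ξ̂, η̂ be independent Gaussian vectors with mean zero and covariances k_BT·Â⁻¹ and k_BT·I respectively. Then R(t) = C[cos(Ωt)ξ̂ + Ω⁻¹sin(Ωt)η̂] (C any fixed matrix) satisfies E[R(t)R(s)ᵀ] = k_BT · C cos(Ω(t−s)) Ω⁻² Cᵀ; in particular the covariance depends only on t−s (stationarity). -/

import Mathlib

open Matrix MeasureTheory ProbabilityTheory


section cfcAux

variable {n : ℕ} {A : Matrix (Fin n) (Fin n) ℝ} (hA : A.IsHermitian)

lemma my_cfc_mul (f g : ℝ → ℝ) :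
    hA.cfc f * hA.cfc g = hA.cfc (fun x => f x * g x) := by
  have rearr : ∀ (a b c e : Matrix (Fin n) (Fin n) ℝ),
      (a * b * c) * (a * e * c) = a * (b * (c * a) * e) * c := fun a b c e => by
    simp only [mul_assoc]
  simp only [Matrix.IsHermitian.cfc, Unitary.conjStarAlgAut_apply]
  rw [rearr, Unitary.star_mul_self_of_mem (SetLike.coe_mem _), mul_one,
    diagonal_mul_diagonal]
  congr! with i

lemma my_cfc_add (f g : ℝ → ℝ) :
    hA.cfc f + hA.cfc g = hA.cfc (fun x => f x + g x) := by
  simp only [Matrix.IsHermitian.cfc, Unitary.conjStarAlgAut_apply]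
  rw [← add_mul, ← mul_add, diagonal_add]
  congr! with i

lemma my_cfc_congr (f g : ℝ → ℝ) (h : ∀ i, f (hA.eigenvalues i) = g (hA.eigenvalues i)) :
    hA.cfc f = hA.cfc g := by
  have hfg : (RCLike.ofReal ∘ f ∘ hA.eigenvalues : Fin n → ℝ)
      = RCLike.ofReal ∘ g ∘ hA.eigenvalues := funext fun i => by simp [h i]
  simp only [Matrix.IsHermitian.cfc, hfg]

lemma my_cfc_one : hA.cfc (fun _ => 1) = 1 := by
  simp only [Matrix.IsHermitian.cfc, Unitary.conjStarAlgAut_apply]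
  have h1 : diagonal (RCLike.ofReal ∘ (fun _ : ℝ => (1:ℝ)) ∘ hA.eigenvalues)
      = (1 : Matrix (Fin n) (Fin n) ℝ) := by
    ext i j
    simp [diagonal_apply, Matrix.one_apply]
  rw [h1, mul_one, Unitary.mul_star_self_of_mem (SetLike.coe_mem _)]

lemma my_cfc_transpose (f : ℝ → ℝ) : (hA.cfc f)ᵀ = hA.cfc f := by
  simp only [Matrix.IsHermitian.cfc, Unitary.conjStarAlgAut_apply]
  rw [← conjTranspose_eq_transpose_of_trivial, ← star_eq_conjTranspose]
  simp only [StarMul.star_mul, star_star, mul_assoc]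
  rw [star_eq_conjTranspose (diagonal _), diagonal_conjTranspose]
  congr 2

lemma my_cfc_id : A = hA.cfc (fun x => x) := by
  conv_lhs => rw [hA.spectral_theorem]
  simp only [Matrix.IsHermitian.cfc]
  congr!

lemma my_inv_eq_cfc (hPD : A.PosDef) : A⁻¹ = hA.cfc (fun x => x⁻¹) := by
  apply Matrix.inv_eq_right_inv
  have h1 : A * hA.cfc (fun x => x⁻¹)
      = hA.cfc (fun x => x) * hA.cfc (fun x => x⁻¹) := by rw [← my_cfc_id]
  rw [h1, my_cfc_mul, ← my_cfc_one hA]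
  exact my_cfc_congr hA _ _ fun i => by
    field_simp [(hPD.eigenvalues_pos i).ne']

end cfcAux

section keylemmas

variable {n : ℕ} {A : Matrix (Fin n) (Fin n) ℝ} (hA : A.IsHermitian)

lemma my_key_matrix (hPD : A.PosDef) (t s : ℝ) :
    hA.cfc (fun x => Real.cos (Real.sqrt x * t)) * A⁻¹
        * hA.cfc (fun x => Real.cos (Real.sqrt x * s))
      + hA.cfc (fun x => Real.sin (Real.sqrt x * t) / Real.sqrt x)
        * hA.cfc (fun x => Real.sin (Real.sqrt x * s) / Real.sqrt x)
    = hA.cfc (fun x => Real.cos (Real.sqrt x * (t - s))) * hA.cfc (fun x => x⁻¹) := by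
  rw [my_inv_eq_cfc hA hPD, my_cfc_mul, my_cfc_mul, my_cfc_mul, my_cfc_mul, my_cfc_add]
  apply my_cfc_congr
  intro i
  have hx := hPD.eigenvalues_pos i
  set x := hA.eigenvalues i with hxdef
  have hs : Real.sqrt x ^ 2 = x := Real.sq_sqrt hx.le
  have hsp : 0 < Real.sqrt x := Real.sqrt_pos.mpr hx
  have hcos : Real.cos (Real.sqrt x * (t - s))
      = Real.cos (Real.sqrt x * t) * Real.cos (Real.sqrt x * s)
        + Real.sin (Real.sqrt x * t) * Real.sin (Real.sqrt x * s) := by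
    rw [mul_sub, Real.cos_sub]
  rw [hcos]
  field_simp
  rw [hs]; ring

end keylemmas

lemma my_integrable_mul {Ω : Type*} [MeasureSpace Ω] {μ : Measure Ω} {f g : Ω → ℝ}
    (hf : MemLp f 2 μ) (hg : MemLp g 2 μ) :
    Integrable (fun ω => f ω * g ω) μ := by
  have hm : AEStronglyMeasurable (fun ω => f ω * g ω) μ :=
    hf.aestronglyMeasurable.mul hg.aestronglyMeasurable
  refine (hf.integrable_sq.add hg.integrable_sq).mono' hm (ae_of_all _ fun ω => ?_)
  have h1 : ‖f ω * g ω‖ = |f ω| * |g ω| := by rw [norm_mul]; rfl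
  rw [h1]
  simp only [Pi.add_apply]
  nlinarith [sq_nonneg (|f ω| - |g ω|), sq_abs (f ω), sq_abs (g ω), abs_nonneg (f ω),
    abs_nonneg (g ω)]

lemma my_entry_tri {m n : ℕ} (X : Matrix (Fin m) (Fin n) ℝ) (M : Matrix (Fin n) (Fin n) ℝ)
    (Y : Matrix (Fin m) (Fin n) ℝ) (i j : Fin m) :
    (X * M * Yᵀ) i j = ∑ k, ∑ l, X i k * M k l * Y j l := by
  rw [Matrix.mul_apply]
  simp_rw [Matrix.mul_apply, transpose_apply, Finset.sum_mul]
  rw [Finset.sum_comm]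

/-- If `ξ̂ ~ N(0, k_BT Ahat⁻¹)` and `η̂ ~ N(0, k_BT I)` are independent (here encoded by
zero means, the prescribed covariances, square-integrability and independence), then
`R(t) = C[cos(Ωt)ξ̂ + Ω⁻¹ sin(Ωt)η̂]` has covariance
`E[R(t)R(s)ᵀ] = k_BT · C cos(Ω(t−s)) Ω⁻² Cᵀ`, depending only on `t − s`. -/
theorem noise_covariance_stationary
    (d m : ℕ) (Ahat : Matrix (Fin d) (Fin d) ℝ) (hAhat : Ahat.PosDef)
    (hH : Ahat.IsHermitian) (kBT : ℝ) (hkBT : 0 < kBT)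
    (C : Matrix (Fin m) (Fin d) ℝ)
    {Ω : Type*} [MeasureSpace Ω] (μ : Measure Ω) [IsProbabilityMeasure μ]
    (ξ η : Ω → (Fin d → ℝ))
    (hmξ : Measurable ξ) (hmη : Measurable η)
    (hL2ξ : ∀ i, MemLp (fun ω => ξ ω i) 2 μ)
    (hL2η : ∀ i, MemLp (fun ω => η ω i) 2 μ)
    (hξ0 : ∀ i, ∫ ω, ξ ω i ∂μ = 0)
    (hη0 : ∀ i, ∫ ω, η ω i ∂μ = 0)
    (hξcov : ∀ i j, ∫ ω, ξ ω i * ξ ω j ∂μ = kBT * Ahat⁻¹ i j)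
    (hηcov : ∀ i j, ∫ ω, η ω i * η ω j ∂μ = kBT * (if i = j then 1 else 0))
    (hindep : IndepFun ξ η μ) :
    let R : ℝ → Ω → (Fin m → ℝ) := fun t ω =>
      C *ᵥ ((hH.cfc fun x => Real.cos (Real.sqrt x * t)) *ᵥ ξ ω
            + (hH.cfc fun x => Real.sin (Real.sqrt x * t) / Real.sqrt x) *ᵥ η ω)
    ∀ (t s : ℝ) (i j : Fin m),
      ∫ ω, R t ω i * R s ω j ∂μ
        = kBT * ((C * hH.cfc (fun x => Real.cos (Real.sqrt x * (t - s)))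
            * hH.cfc (fun x => x⁻¹) * Cᵀ) i j) := by
  intro R t s i j
  set At : ℝ → Matrix (Fin d) (Fin d) ℝ :=
    fun u => hH.cfc fun x => Real.cos (Real.sqrt x * u) with hAtdef
  set Bt : ℝ → Matrix (Fin d) (Fin d) ℝ :=
    fun u => hH.cfc fun x => Real.sin (Real.sqrt x * u) / Real.sqrt x with hBtdef
  set P : ℝ → Matrix (Fin m) (Fin d) ℝ := fun u => C * At u with hPdef
  set Q : ℝ → Matrix (Fin m) (Fin d) ℝ := fun u => C * Bt u with hQdef
  -- representation of R entrywise
  have hRrep : ∀ (u : ℝ) (ω : Ω) (a : Fin m),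
      R u ω a = ∑ k, (P u a k * ξ ω k + Q u a k * η ω k) := by
    intro u ω a
    simp only [R, hPdef, hQdef, hAtdef, hBtdef, mulVec_add, mulVec_mulVec, Pi.add_apply]
    simp [mulVec, dotProduct, Finset.sum_add_distrib]
  -- cross covariances vanish by independence
  have hcross1 : ∀ k l, ∫ ω, ξ ω k * η ω l ∂μ = 0 := by
    intro k l
    have h := (hindep.comp (measurable_pi_apply k) (measurable_pi_apply l)).integral_fun_mul_eq_mul_integral
      (hL2ξ k).aestronglyMeasurable (hL2η l).aestronglyMeasurable
    simp only [Function.comp_def] at h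
    rw [h, hξ0 k, hη0 l, zero_mul]
  have hcross2 : ∀ k l, ∫ ω, η ω k * ξ ω l ∂μ = 0 := by
    intro k l
    have h := (hindep.symm.comp (measurable_pi_apply k) (measurable_pi_apply l)).integral_fun_mul_eq_mul_integral
      (hL2η k).aestronglyMeasurable (hL2ξ l).aestronglyMeasurable
    simp only [Function.comp_def] at h
    rw [h, hη0 k, hξ0 l, zero_mul]
  -- integrability
  have hIξξ : ∀ k l : Fin d, Integrable (fun ω => ξ ω k * ξ ω l) μ :=
    fun k l => my_integrable_mul (hL2ξ k) (hL2ξ l)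
  have hIξη : ∀ k l : Fin d, Integrable (fun ω => ξ ω k * η ω l) μ :=
    fun k l => my_integrable_mul (hL2ξ k) (hL2η l)
  have hIηξ : ∀ k l : Fin d, Integrable (fun ω => η ω k * ξ ω l) μ :=
    fun k l => my_integrable_mul (hL2η k) (hL2ξ l)
  have hIηη : ∀ k l : Fin d, Integrable (fun ω => η ω k * η ω l) μ :=
    fun k l => my_integrable_mul (hL2η k) (hL2η l)
  have hterm : ∀ k l : Fin d, Integrable (fun ω =>
      (P t i k * ξ ω k + Q t i k * η ω k) * (P s j l * ξ ω l + Q s j l * η ω l)) μ := by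
    intro k l
    have hfun : (fun ω => (P t i k * ξ ω k + Q t i k * η ω k)
          * (P s j l * ξ ω l + Q s j l * η ω l))
        = fun ω => P t i k * P s j l * (ξ ω k * ξ ω l)
          + P t i k * Q s j l * (ξ ω k * η ω l)
          + Q t i k * P s j l * (η ω k * ξ ω l)
          + Q t i k * Q s j l * (η ω k * η ω l) := funext fun ω => by ring
    rw [hfun]
    exact ((((hIξξ k l).const_mul _).add ((hIξη k l).const_mul _)).add
      ((hIηξ k l).const_mul _)).add ((hIηη k l).const_mul _)
  -- value of each term
  have hval : ∀ k l : Fin d,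
      ∫ ω, (P t i k * ξ ω k + Q t i k * η ω k) * (P s j l * ξ ω l + Q s j l * η ω l) ∂μ
        = P t i k * P s j l * (kBT * Ahat⁻¹ k l)
          + Q t i k * Q s j l * (kBT * (if k = l then 1 else 0)) := by
    intro k l
    have hfun : (fun ω => (P t i k * ξ ω k + Q t i k * η ω k)
          * (P s j l * ξ ω l + Q s j l * η ω l))
        = fun ω => P t i k * P s j l * (ξ ω k * ξ ω l)
          + P t i k * Q s j l * (ξ ω k * η ω l)
          + Q t i k * P s j l * (η ω k * ξ ω l)
          + Q t i k * Q s j l * (η ω k * η ω l) := funext fun ω => by ring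
    have i1 : Integrable (fun ω => P t i k * P s j l * (ξ ω k * ξ ω l)) μ :=
      (hIξξ k l).const_mul _
    have i2 : Integrable (fun ω => P t i k * Q s j l * (ξ ω k * η ω l)) μ :=
      (hIξη k l).const_mul _
    have i3 : Integrable (fun ω => Q t i k * P s j l * (η ω k * ξ ω l)) μ :=
      (hIηξ k l).const_mul _
    have i4 : Integrable (fun ω => Q t i k * Q s j l * (η ω k * η ω l)) μ :=
      (hIηη k l).const_mul _
    have i12 : Integrable (fun ω => P t i k * P s j l * (ξ ω k * ξ ω l)
        + P t i k * Q s j l * (ξ ω k * η ω l)) μ := i1.add i2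
    have i123 : Integrable (fun ω => P t i k * P s j l * (ξ ω k * ξ ω l)
        + P t i k * Q s j l * (ξ ω k * η ω l)
        + Q t i k * P s j l * (η ω k * ξ ω l)) μ := i12.add i3
    rw [hfun, integral_add i123 i4, integral_add i12 i3, integral_add i1 i2,
      integral_const_mul, integral_const_mul, integral_const_mul, integral_const_mul,
      hξcov, hcross1, hcross2, hηcov]
    ring
  calc ∫ ω, R t ω i * R s ω j ∂μ
      = ∫ ω, ∑ k, ∑ l, (P t i k * ξ ω k + Q t i k * η ω k)
          * (P s j l * ξ ω l + Q s j l * η ω l) ∂μ := by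
        apply integral_congr_ae
        filter_upwards with ω
        rw [hRrep, hRrep, Finset.sum_mul_sum]
    _ = ∑ k, ∑ l, ∫ ω, (P t i k * ξ ω k + Q t i k * η ω k)
          * (P s j l * ξ ω l + Q s j l * η ω l) ∂μ := by
        rw [integral_finset_sum _ fun k _ => integrable_finset_sum _ fun l _ => hterm k l]
        exact Finset.sum_congr rfl fun k _ => integral_finset_sum _ fun l _ => hterm k l
    _ = ∑ k, ∑ l, (P t i k * P s j l * (kBT * Ahat⁻¹ k l)
          + Q t i k * Q s j l * (kBT * (if k = l then 1 else 0))) :=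
        Finset.sum_congr rfl fun k _ => Finset.sum_congr rfl fun l _ => hval k l
    _ = kBT * ((P t * Ahat⁻¹ * (P s)ᵀ) i j + (Q t * (Q s)ᵀ) i j) := by
        rw [my_entry_tri, Matrix.mul_apply]
        simp only [Finset.sum_add_distrib, transpose_apply]
        rw [mul_add, Finset.mul_sum]
        congr 1
        · refine Finset.sum_congr rfl fun k _ => ?_
          rw [Finset.mul_sum]
          exact Finset.sum_congr rfl fun l _ => by ring
        · rw [Finset.mul_sum]
          refine Finset.sum_congr rfl fun k _ => ?_
          simp [mul_ite, Finset.sum_ite_eq]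
          ring
    _ = kBT * ((C * hH.cfc (fun x => Real.cos (Real.sqrt x * (t - s)))
          * hH.cfc (fun x => x⁻¹) * Cᵀ) i j) := by
        congr 1
        rw [← Matrix.add_apply]
        congr 1
        have h1 : P t * Ahat⁻¹ * (P s)ᵀ + Q t * (Q s)ᵀ
            = C * (At t * Ahat⁻¹ * At s + Bt t * Bt s) * Cᵀ := by
          simp only [hPdef, hQdef, transpose_mul, hAtdef, hBtdef, my_cfc_transpose]
          simp only [Matrix.mul_add, Matrix.add_mul, Matrix.mul_assoc]
        rw [h1, hAtdef, hBtdef]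
        rw [my_key_matrix hH hAhat t s]
        simp only [Matrix.mul_assoc]
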